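/- Let V_H ⊆ Ū_H, let v₁ be a word over V_H ∪ {t, t⁻¹} in HNN reduced form, and let v_k be a word over Ū_H ∪ {t, t⁻¹} in HNN reduced form such that v₁ ≿ v_k. Then there exists a word v_k′ over V_H ∪ {t, t⁻¹} such that v_k ∼ v_k′. -/

import Mathlib

/-- `S` is a free basis of the group `G`: the induced map from the free group
on `S` is an isomorphism. -/
def IsFreeBasis {G : Type*} [Group G] (S : Set G) : Prop :=
  Function.Bijective ⇑(FreeGroup.lift (Subtype.val : S → G))

/-- Letters of words over `Ū_H ∪ {t, t⁻¹}`: an element of the free group `H`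
(intended to lie in `Ū_H`), the stable letter `t`, or its inverse. -/
inductive HLetter (X : Type*) where
  | gen : FreeGroup X → HLetter X
  | t : HLetter X
  | tinv : HLetter X

namespace HnnPaper

variable {X : Type*}

/-- A word `w` is a word over `S ∪ {t, t⁻¹}` if all its group letters lie in `S`. -/
def WordOver (S : Set (FreeGroup X)) (w : List (HLetter X)) : Prop :=
  ∀ l ∈ w, ∀ u : FreeGroup X, l = HLetter.gen u → u ∈ S

/-- A word consisting only of group letters (no `t`, `t⁻¹`). -/
def IsGenOnly (w : List (HLetter X)) : Prop :=
  ∀ l ∈ w, ∃ u : FreeGroup X, l = HLetter.gen u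

/-- The element of `H` represented by a `t`-free word (treats `t`-letters as `1`). -/
def evalH (w : List (HLetter X)) : FreeGroup X :=
  (w.map fun l => match l with
    | HLetter.gen u => u
    | _ => 1).prod

/-- `w` is in HNN reduced form: it has no subword `t⁻¹ w_i t` with `w_i` a `t`-free
word representing an element of `A = ⟨U_A⟩`, and no subword `t w_i t⁻¹` with `w_i`
a `t`-free word representing an element of `B = ⟨U_B⟩`. -/
def HNNReducedWord (UA UB : Set (FreeGroup X)) (w : List (HLetter X)) : Prop :=
  (∀ p mid s, w = p ++ [HLetter.tinv] ++ mid ++ [HLetter.t] ++ s →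
      IsGenOnly mid → evalH mid ∉ Subgroup.closure UA) ∧
  (∀ p mid s, w = p ++ [HLetter.t] ++ mid ++ [HLetter.tinv] ++ s →
      IsGenOnly mid → evalH mid ∉ Subgroup.closure UB)

variable {UA UB : Set (FreeGroup X)}

/-- The element of the HNN extension `H* = H ∗_{t,φ:A→B}` represented by a word. -/
def evalStar (φ : ↥(Subgroup.closure UA) ≃* ↥(Subgroup.closure UB))
    (w : List (HLetter X)) :
    HNNExtension (FreeGroup X) (Subgroup.closure UA) (Subgroup.closure UB) φ :=
  (w.map fun l => match l with
    | HLetter.gen u => HNNExtension.of u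
    | HLetter.t => HNNExtension.t
    | HLetter.tinv => HNNExtension.t⁻¹).prod

/-- Elementary addition: insertion of a pair `u u⁻¹` with `u ∈ Ū_H`. -/
def ElemAdd (UH : Set (FreeGroup X)) (w w' : List (HLetter X)) : Prop :=
  ∃ (p s : List (HLetter X)) (u : FreeGroup X), u ∈ UH ∪ UH⁻¹ ∧ w = p ++ s ∧
    w' = p ++ [HLetter.gen u, HLetter.gen u⁻¹] ++ s

/-- Elementary cancellation: deletion of a pair `u u⁻¹` with `u ∈ Ū_H`. -/
def ElemDel (UH : Set (FreeGroup X)) (w w' : List (HLetter X)) : Prop :=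
  ElemAdd UH w' w

/-- Elementary semicommutation: replacement of `u_a t` by `t u_b`, or of `t⁻¹ u_a`
by `u_b t⁻¹` (or conversely in either case), where `u_a ∈ Ū_A`, `u_b ∈ Ū_B` and
`φ(u_a) = u_b`. -/
def ElemSemi (φ : ↥(Subgroup.closure UA) ≃* ↥(Subgroup.closure UB))
    (w w' : List (HLetter X)) : Prop :=
  ∃ (p s : List (HLetter X)) (a : ↥(Subgroup.closure UA)), (a : FreeGroup X) ∈ UA ∪ UA⁻¹ ∧
    ((w = p ++ [HLetter.gen ↑a, HLetter.t] ++ s ∧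
      w' = p ++ [HLetter.t, HLetter.gen ↑(φ a)] ++ s) ∨
     (w = p ++ [HLetter.t, HLetter.gen ↑(φ a)] ++ s ∧
      w' = p ++ [HLetter.gen ↑a, HLetter.t] ++ s) ∨
     (w = p ++ [HLetter.tinv, HLetter.gen ↑a] ++ s ∧
      w' = p ++ [HLetter.gen ↑(φ a), HLetter.tinv] ++ s) ∨
     (w = p ++ [HLetter.gen ↑(φ a), HLetter.tinv] ++ s ∧
      w' = p ++ [HLetter.tinv, HLetter.gen ↑a] ++ s))

/-- An elementary operation: an elementary addition, cancellation or semicommutation. -/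
def ElemOp (UH : Set (FreeGroup X)) (φ : ↥(Subgroup.closure UA) ≃* ↥(Subgroup.closure UB))
    (w w' : List (HLetter X)) : Prop :=
  ElemAdd UH w w' ∨ ElemDel UH w w' ∨ ElemSemi φ w w'

/-- `w ∼ w'`: a finite sequence of elementary semicommutations turns `w` into `w'`. -/
def Sim (φ : ↥(Subgroup.closure UA) ≃* ↥(Subgroup.closure UB)) :
    List (HLetter X) → List (HLetter X) → Prop :=
  Relation.ReflTransGen (ElemSemi φ)

/-- The word `t^n` (a run of `t`'s or of `t⁻¹`'s). -/
def tPow (n : ℤ) : List (HLetter X) :=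
  if 0 ≤ n then List.replicate n.toNat HLetter.t
  else List.replicate (-n).toNat HLetter.tinv

/-- The word `t^{n₀} u₁ t^{n₁} ⋯ u_k t^{n_k}` determined by `n₀` and the list
`[(u₁,n₁),…,(u_k,n_k)]`. -/
def blockWord (n0 : ℤ) (l : List (FreeGroup X × ℤ)) : List (HLetter X) :=
  tPow n0 ++ l.flatMap (fun p => HLetter.gen p.1 :: tPow p.2)

/-- `w →_m v`: `w ≡ t^{n₀} u₁ t^{n₁} ⋯ u_k t^{n_k}` with `u_{m+1} ≡ u_m⁻¹` and
`n_m = 0`, and `v` is obtained from `w` by the elementary cancellation of the pair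
`u_m u_{m+1}` (so `t^{n_{m-1}}` becomes `t^{n_{m-1}+n_{m+1}}`). -/
def CancelAt (m : ℕ) (w v : List (HLetter X)) : Prop :=
  ∃ (n0 : ℤ) (pre post : List (FreeGroup X × ℤ)) (u : FreeGroup X) (n' : ℤ),
    pre.length + 1 = m ∧
    w = blockWord n0 (pre ++ [(u, 0), (u⁻¹, n')] ++ post) ∧
    ((pre = [] ∧ v = blockWord (n0 + n') post) ∨
     (∃ pre' u' nl, pre = pre' ++ [(u', nl)] ∧
        v = blockWord n0 (pre' ++ [(u', nl + n')] ++ post)))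

/-- `w ⇝_m v`: there are HNN reduced words `w′, v′` with `w ∼ w′ →_m v′ ∼ v`. -/
def RsaAt (φ : ↥(Subgroup.closure UA) ≃* ↥(Subgroup.closure UB)) (m : ℕ)
    (w v : List (HLetter X)) : Prop :=
  ∃ w' v', HNNReducedWord UA UB w' ∧ HNNReducedWord UA UB v' ∧
    Sim φ w w' ∧ CancelAt m w' v' ∧ Sim φ v' v

/-- `w ⇝ v`: `w ⇝_m v` for some `m`. -/
def Rsa (φ : ↥(Subgroup.closure UA) ≃* ↥(Subgroup.closure UB))
    (w v : List (HLetter X)) : Prop :=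
  ∃ m, RsaAt φ m w v

/-- `w ≿ v`: either `w ∼ v` or there is a sequence `w ≡ w₀ ⇝ w₁ ⇝ ⋯ ⇝ w_k ≡ v`
with `k ≥ 1`. -/
def Succsim (φ : ↥(Subgroup.closure UA) ≃* ↥(Subgroup.closure UB))
    (w v : List (HLetter X)) : Prop :=
  Sim φ w v ∨ Relation.TransGen (Rsa φ) w v

/-- `v` is in most reduced form: it is HNN reduced and no `v ⇝ v'` is possible. -/
def MostReduced (φ : ↥(Subgroup.closure UA) ≃* ↥(Subgroup.closure UB))
    (v : List (HLetter X)) : Prop :=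
  HNNReducedWord UA UB v ∧ ∀ v', ¬ Rsa φ v v'

/-- `MRF(w)`: the set of words `v` with `v ≾ w` that are in most reduced form. -/
def MRF (φ : ↥(Subgroup.closure UA) ≃* ↥(Subgroup.closure UB))
    (w : List (HLetter X)) : Set (List (HLetter X)) :=
  {v | Succsim φ w v ∧ MostReduced φ v}

/-- The partial bijection `Ū_A → Ū_B` induced by `φ`, as a relation on `H`. -/
def PhiRel (φ : ↥(Subgroup.closure UA) ≃* ↥(Subgroup.closure UB))
    (u v : FreeGroup X) : Prop :=
  ∃ a : ↥(Subgroup.closure UA), (a : FreeGroup X) ∈ UA ∪ UA⁻¹ ∧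
    (a : FreeGroup X) = u ∧ ((φ a : ↥(Subgroup.closure UB)) : FreeGroup X) = v

/-- `v = φ^n(u)` for `n ∈ ℕ`. -/
def PhiPowN (φ : ↥(Subgroup.closure UA) ≃* ↥(Subgroup.closure UB)) :
    ℕ → FreeGroup X → FreeGroup X → Prop
  | 0 => Eq
  | (n + 1) => fun u v => ∃ w, PhiPowN φ n u w ∧ PhiRel φ w v

/-- `v = φ^z(u)` for `z ∈ ℤ`. -/
def PhiZPow (φ : ↥(Subgroup.closure UA) ≃* ↥(Subgroup.closure UB)) (z : ℤ)
    (u v : FreeGroup X) : Prop :=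
  if 0 ≤ z then PhiPowN φ z.toNat u v else PhiPowN φ (-z).toNat v u


section Aux

variable {φ : ↥(Subgroup.closure UA) ≃* ↥(Subgroup.closure UB)}

lemma align {α : Type*} {q r p mid s : List α} {x y c d : α}
    (h : q ++ x :: y :: r = p ++ c :: (mid ++ d :: s)) :
    (∃ p₁, p = q ++ x :: y :: p₁ ∧ r = p₁ ++ c :: (mid ++ d :: s)) ∨
    (y = c ∧ p = q ++ [x] ∧ r = mid ++ d :: s) ∨
    (x = c ∧ q = p ∧ ((mid = [] ∧ y = d ∧ r = s) ∨ (∃ m₁, mid = y :: m₁ ∧ r = m₁ ++ d :: s))) ∨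
    (∃ m₁ m₂, mid = m₁ ++ x :: y :: m₂ ∧ q = p ++ c :: m₁ ∧ r = m₂ ++ d :: s) ∨
    (y = d ∧ (∃ m₁, mid = m₁ ++ [x] ∧ q = p ++ c :: m₁ ∧ r = s)) ∨
    (x = d ∧ q = p ++ c :: mid ∧ s = y :: r) ∨
    (∃ s₁, q = p ++ c :: mid ++ d :: s₁ ∧ s = s₁ ++ x :: y :: r) := by
  rcases List.append_eq_append_iff.mp h with ⟨a', ha1, ha2⟩ | ⟨c', hc1, hc2⟩
  · obtain _ | ⟨a, _ | ⟨b, p₁⟩⟩ := a'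
    · simp only [List.nil_append] at ha2
      obtain ⟨hx, ha2⟩ := List.cons_eq_cons.mp ha2
      obtain _ | ⟨m, m₁⟩ := mid
      · simp only [List.nil_append] at ha2
        obtain ⟨hy, hr⟩ := List.cons_eq_cons.mp ha2
        exact Or.inr (Or.inr (Or.inl ⟨hx, by simpa using ha1.symm, Or.inl ⟨rfl, hy, hr⟩⟩))
      · simp only [List.cons_append, List.cons.injEq] at ha2
        obtain ⟨hy, hr⟩ := ha2
        exact Or.inr (Or.inr (Or.inl ⟨hx, by simpa using ha1.symm,
          Or.inr ⟨m₁, by rw [hy], hr⟩⟩))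
    · simp only [List.cons_append, List.nil_append, List.cons.injEq] at ha2
      obtain ⟨hx, hy, hr⟩ := ha2
      exact Or.inr (Or.inl ⟨hy, by rw [ha1, hx], hr⟩)
    · simp only [List.cons_append, List.cons.injEq] at ha2
      obtain ⟨hx, hy, hr⟩ := ha2
      exact Or.inl ⟨p₁, by rw [ha1, hx, hy], hr⟩
  · obtain _ | ⟨e, c'⟩ := c'
    · simp only [List.nil_append] at hc2
      obtain ⟨hx, hc2⟩ := List.cons_eq_cons.mp hc2
      obtain _ | ⟨m, m₁⟩ := mid
      · simp only [List.nil_append] at hc2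
        obtain ⟨hy, hr⟩ := List.cons_eq_cons.mp hc2
        exact Or.inr (Or.inr (Or.inl ⟨hx.symm, by simpa using hc1, Or.inl ⟨rfl, hy.symm, hr.symm⟩⟩))
      · simp only [List.cons_append, List.cons.injEq] at hc2
        obtain ⟨hy, hr⟩ := hc2
        exact Or.inr (Or.inr (Or.inl ⟨hx.symm, by simpa using hc1,
          Or.inr ⟨m₁, by rw [hy], hr.symm⟩⟩))
    · simp only [List.cons_append, List.cons.injEq] at hc2
      obtain ⟨hce, hc2⟩ := hc2
      -- hc2 : mid ++ d :: s = c' ++ x :: y :: r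
      rcases List.append_eq_append_iff.mp hc2.symm with ⟨a₂, ha1', ha2'⟩ | ⟨e₂, he1, he2⟩
      · -- mid = c' ++ a₂, x :: y :: r = a₂ ++ d :: s
        obtain _ | ⟨f, _ | ⟨g, m₂⟩⟩ := a₂
        · simp only [List.nil_append] at ha2'
          obtain ⟨hx, hs⟩ := List.cons_eq_cons.mp ha2'
          refine Or.inr (Or.inr (Or.inr (Or.inr (Or.inr (Or.inl ⟨hx, ?_, hs.symm⟩)))))
          rw [hc1, hce, ha1']; simp
        · simp only [List.cons_append, List.nil_append, List.cons.injEq] at ha2'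
          obtain ⟨hx, hy, hs⟩ := ha2'
          refine Or.inr (Or.inr (Or.inr (Or.inr (Or.inl ⟨hy, c', ?_, ?_, hs⟩))))
          · rw [ha1', hx]
          · rw [hc1, hce]
        · simp only [List.cons_append, List.cons.injEq] at ha2'
          obtain ⟨hx, hy, hr⟩ := ha2'
          refine Or.inr (Or.inr (Or.inr (Or.inl ⟨c', m₂, ?_, ?_, hr⟩)))
          · rw [ha1', hx, hy]
          · rw [hc1, hce]
      · -- c' = mid ++ e₂, d :: s = e₂ ++ x :: y :: r
        obtain _ | ⟨f, s₁⟩ := e₂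
        · simp only [List.nil_append] at he2
          obtain ⟨hx, hs⟩ := List.cons_eq_cons.mp he2
          refine Or.inr (Or.inr (Or.inr (Or.inr (Or.inr (Or.inl ⟨hx.symm, ?_, hs⟩)))))
          rw [hc1, hce, he1]; simp
        · simp only [List.cons_append, List.cons.injEq] at he2
          obtain ⟨hd, hs⟩ := he2
          refine Or.inr (Or.inr (Or.inr (Or.inr (Or.inr (Or.inr ⟨s₁, ?_, hs⟩)))))
          rw [hc1, hce, he1, hd]; simp

-- basic tPow lemmas
lemma tPow_zero : (tPow 0 : List (HLetter X)) = [] := by simp [tPow]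

lemma mem_tPow {z : ℤ} {l : HLetter X} (h : l ∈ (tPow z : List (HLetter X))) :
    l = HLetter.t ∨ l = HLetter.tinv := by
  unfold tPow at h
  split at h <;> simp_all [List.eq_of_mem_replicate h]

lemma tPow_cons_pos {z : ℤ} (hz : 0 < z) :
    (tPow z : List (HLetter X)) = HLetter.t :: tPow (z - 1) := by
  unfold tPow
  rw [if_pos hz.le, if_pos (by omega)]
  rw [show z.toNat = (z-1).toNat + 1 by omega, List.replicate_succ]

lemma tPow_snoc_pos {z : ℤ} (hz : 0 < z) :
    (tPow z : List (HLetter X)) = tPow (z - 1) ++ [HLetter.t] := by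
  unfold tPow
  rw [if_pos hz.le, if_pos (by omega)]
  rw [show z.toNat = (z-1).toNat + 1 by omega, List.replicate_succ']

lemma tPow_cons_neg {z : ℤ} (hz : z < 0) :
    (tPow z : List (HLetter X)) = HLetter.tinv :: tPow (z + 1) := by
  unfold tPow
  rw [if_neg (by omega)]
  by_cases h1 : 0 ≤ z + 1
  · rw [if_pos h1, show (-z).toNat = 1 by omega, show (z+1).toNat = 0 by omega]
    simp
  · rw [if_neg h1, show (-z).toNat = (-(z+1)).toNat + 1 by omega, List.replicate_succ]

lemma tPow_snoc_neg {z : ℤ} (hz : z < 0) :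
    (tPow z : List (HLetter X)) = tPow (z + 1) ++ [HLetter.tinv] := by
  unfold tPow
  rw [if_neg (by omega)]
  by_cases h1 : 0 ≤ z + 1
  · rw [if_pos h1, show (-z).toNat = 1 by omega, show (z+1).toNat = 0 by omega]
    simp
  · rw [if_neg h1, show (-z).toNat = (-(z+1)).toNat + 1 by omega, List.replicate_succ']

lemma tPow_add_nonneg {a b : ℤ} (ha : 0 ≤ a) (hb : 0 ≤ b) :
    (tPow (a + b) : List (HLetter X)) = tPow a ++ tPow b := by
  unfold tPow
  rw [if_pos (by omega), if_pos ha, if_pos hb,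
    show (a+b).toNat = a.toNat + b.toNat by omega, List.replicate_add]

lemma tPow_add_nonpos {a b : ℤ} (ha : a ≤ 0) (hb : b ≤ 0) :
    (tPow (a + b) : List (HLetter X)) = tPow a ++ tPow b := by
  unfold tPow
  by_cases h0 : 0 ≤ a + b
  · have : a = 0 ∧ b = 0 := by omega
    simp [this.1, this.2]
  · rw [if_neg h0]
    by_cases ha0 : a = 0
    · subst ha0
      rw [zero_add, if_pos (le_refl (0:ℤ)), if_neg (show ¬(0:ℤ) ≤ b by omega)]
      simp
    by_cases hb0 : b = 0
    · subst hb0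
      rw [add_zero, if_neg (show ¬(0:ℤ) ≤ a by omega), if_pos (le_refl (0:ℤ))]
      simp
    rw [if_neg (by omega), if_neg (by omega),
      show (-(a+b)).toNat = (-a).toNat + (-b).toNat by omega, List.replicate_add]

-- PhiRel lemmas
lemma phiRel_func {u v v' : FreeGroup X} (h : PhiRel φ u v) (h' : PhiRel φ u v') :
    v = v' := by
  obtain ⟨a, _, ha, hv⟩ := h
  obtain ⟨a', _, ha', hv'⟩ := h'
  have : a = a' := Subtype.ext (ha.trans ha'.symm)
  rw [← hv, ← hv', this]

lemma phiRel_inj {u u' v : FreeGroup X} (h : PhiRel φ u v) (h' : PhiRel φ u' v) :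
    u = u' := by
  obtain ⟨a, _, ha, hv⟩ := h
  obtain ⟨a', _, ha', hv'⟩ := h'
  have h2 : φ a = φ a' := Subtype.ext (hv.trans hv'.symm)
  have : a = a' := φ.injective h2
  rw [← ha, ← ha', this]

lemma phiRel_inv {u v : FreeGroup X} (h : PhiRel φ u v) : PhiRel φ u⁻¹ v⁻¹ := by
  obtain ⟨a, hmem, ha, hv⟩ := h
  refine ⟨a⁻¹, ?_, by simp [ha], by simp [← hv]⟩
  rcases hmem with hm | hm
  · right
    simpa using hm
  · left
    have : ((a : FreeGroup X))⁻¹ ∈ UA := by simpa [Set.mem_inv] using hm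
    simpa using this

lemma phiPowN_cons {n : ℕ} {u v : FreeGroup X} :
    PhiPowN φ (n + 1) u v ↔ ∃ w, PhiRel φ u w ∧ PhiPowN φ n w v := by
  induction n generalizing v with
  | zero =>
    constructor
    · rintro ⟨w, hw, hr⟩
      obtain rfl : u = w := hw
      exact ⟨v, hr, rfl⟩
    · rintro ⟨w, hr, hw⟩
      obtain rfl : w = v := hw
      exact ⟨u, rfl, hr⟩
  | succ n ih =>
    constructor
    · rintro ⟨w, hw, hr⟩
      obtain ⟨w', hr', hp⟩ := ih.mp hw
      exact ⟨w', hr', w, hp, hr⟩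
    · rintro ⟨w, hr, w', hp, hr'⟩
      exact ⟨w', ih.mpr ⟨w, hr, hp⟩, hr'⟩

lemma Z1 {a b v : FreeGroup X} {z : ℤ} (hab : PhiRel φ a b) (h : PhiZPow φ z b v) :
    PhiZPow φ (z + 1) a v := by
  unfold PhiZPow at *
  by_cases hz : 0 ≤ z
  · rw [if_pos hz] at h
    rw [if_pos (by omega), show (z+1).toNat = z.toNat + 1 by omega]
    exact phiPowN_cons.mpr ⟨b, hab, h⟩
  · rw [if_neg hz] at h
    by_cases hz1 : 0 ≤ z + 1
    · have hz0 : z = -1 := by omega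
      subst hz0
      rw [if_pos (by omega)]
      have : PhiPowN φ 1 v b := by simpa using h
      obtain ⟨w, hw, hr⟩ := this
      have : v = w := hw
      subst this
      simpa [PhiPowN] using (phiRel_inj hr hab).symm
    · rw [if_neg hz1]
      rw [show (-z).toNat = (-(z+1)).toNat + 1 by omega] at h
      obtain ⟨w, hw, hr⟩ := h
      rwa [phiRel_inj hr hab] at hw

lemma Z2 {a b v : FreeGroup X} {z : ℤ} (hab : PhiRel φ a b) (h : PhiZPow φ z a v) :
    PhiZPow φ (z - 1) b v := by
  unfold PhiZPow at *
  by_cases hz : 0 < z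
  · rw [if_pos hz.le, show z.toNat = (z-1).toNat + 1 by omega] at h
    obtain ⟨w, hr, hp⟩ := phiPowN_cons.mp h
    rw [if_pos (by omega)]
    rwa [phiRel_func hab hr]
  · by_cases hz0 : z = 0
    · subst hz0
      rw [if_pos le_rfl] at h
      have : a = v := h
      subst this
      rw [if_neg (by omega)]
      simpa using ⟨a, rfl, hab⟩
    · rw [if_neg (by omega)] at h
      rw [if_neg (by omega), show (-(z-1)).toNat = (-z).toNat + 1 by omega]
      exact ⟨a, h, hab⟩

lemma Z3 {u a b : FreeGroup X} {z : ℤ} (h : PhiZPow φ z u b) (hab : PhiRel φ a b) :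
    PhiZPow φ (z - 1) u a := by
  unfold PhiZPow at *
  by_cases hz : 0 < z
  · rw [if_pos hz.le, show z.toNat = (z-1).toNat + 1 by omega] at h
    obtain ⟨w, hw, hr⟩ := h
    rw [if_pos (by omega)]
    rwa [phiRel_inj hab hr]
  · by_cases hz0 : z = 0
    · subst hz0
      rw [if_pos le_rfl] at h
      have : u = b := h
      subst this
      rw [if_neg (by omega)]
      simpa using ⟨a, rfl, hab⟩
    · rw [if_neg (by omega)] at h
      rw [if_neg (by omega), show (-(z-1)).toNat = (-z).toNat + 1 by omega]
      exact phiPowN_cons.mpr ⟨b, hab, h⟩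

lemma Z4 {u a b : FreeGroup X} {z : ℤ} (h : PhiZPow φ z u a) (hab : PhiRel φ a b) :
    PhiZPow φ (z + 1) u b := by
  unfold PhiZPow at *
  by_cases hz : 0 ≤ z
  · rw [if_pos hz] at h
    rw [if_pos (by omega), show (z+1).toNat = z.toNat + 1 by omega]
    exact ⟨a, h, hab⟩
  · rw [if_neg hz] at h
    obtain ⟨w, hr, hp⟩ := phiPowN_cons.mp
      (by rwa [show (-z).toNat = ((-z).toNat - 1) + 1 by omega] at h)
    rw [phiRel_func hab hr]
    by_cases hz1 : 0 ≤ z + 1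
    · have : z = -1 := by omega
      subst this
      rw [if_pos (by omega)]
      simpa [PhiPowN] using hp.symm
    · rw [if_neg hz1]
      rwa [show (-(z+1)).toNat = (-z).toNat - 1 by omega]

lemma evalH_cons_gen (u : FreeGroup X) (l : List (HLetter X)) :
    evalH (HLetter.gen u :: l) = u * evalH l := by simp [evalH]

lemma evalH_append (l1 l2 : List (HLetter X)) :
    evalH (l1 ++ l2) = evalH l1 * evalH l2 := by simp [evalH]

lemma evalH_singleton (u : FreeGroup X) : evalH [HLetter.gen u] = u := by simp [evalH]

lemma mem_of_mul_mem_left {G : Type*} [Group G] {S : Subgroup G} {a b : G}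
    (ha : a ∈ S) (h : a * b ∈ S) : b ∈ S := by
  have := mul_mem (inv_mem ha) h
  rwa [inv_mul_cancel_left] at this

lemma mem_of_mul_mem_right {G : Type*} [Group G] {S : Subgroup G} {a b : G}
    (hb : b ∈ S) (h : a * b ∈ S) : a ∈ S := by
  have := mul_mem h (inv_mem hb)
  rwa [mul_inv_cancel_right] at this

lemma elemSemi_symm {w w' : List (HLetter X)} (h : ElemSemi φ w w') : ElemSemi φ w' w := by
  obtain ⟨p, s, a, ha, hc⟩ := h
  exact ⟨p, s, a, ha, by tauto⟩

lemma sim_symm {w w' : List (HLetter X)} (h : Sim φ w w') : Sim φ w' w := by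
  induction h with
  | refl => exact Relation.ReflTransGen.refl
  | tail _ hstep ih => exact Relation.ReflTransGen.head (elemSemi_symm hstep) ih

lemma hnnred_of_elemSemi {w w' : List (HLetter X)}
    (hred : HNNReducedWord UA UB w) (hs : ElemSemi φ w w') :
    HNNReducedWord UA UB w' := by
  obtain ⟨q, r, a, ha, hcase⟩ := hs
  constructor
  · intro p mid s hw' hgen hmem
    rcases hcase with ⟨hw, hw'eq⟩ | ⟨hw, hw'eq⟩ | ⟨hw, hw'eq⟩ | ⟨hw, hw'eq⟩ <;>
      rw [hw'eq] at hw' <;>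
      simp only [List.append_assoc, List.cons_append, List.nil_append] at hw' <;>
      rcases align hw' with ⟨p₁, hp, hr⟩ | ⟨hy, hp, hr⟩ |
        ⟨hx, hq, (⟨hmid, hy, hr⟩ | ⟨m₁, hmid, hr⟩)⟩ |
        ⟨m₁, m₂, hmid, hq, hr⟩ | ⟨hy, m₁, hmid, hq, hr⟩ | ⟨hx, hq, hs'⟩ | ⟨s₁, hq, hs'⟩
    -- D1 : w pair [gen a, t], w' pair [t, gen (φ a)]
    · -- pair in p
      exact hred.1 (q ++ HLetter.gen ↑a :: HLetter.t :: p₁) mid s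
        (by rw [hw, hr]; simp) hgen hmem
    · -- y = tinv : gen (φ a) = tinv, impossible
      simp at hy
    · -- x = tinv : t = tinv, impossible
      simp at hx
    · simp at hx
    · -- pair in mid : t ∈ mid impossible
      obtain ⟨u, hu⟩ := hgen HLetter.t (by simp [hmid])
      simp at hu
    · -- y = t, mid = m₁ ++ [x] = m₁ ++ [t] : t ∈ mid impossible
      obtain ⟨u, hu⟩ := hgen HLetter.t (by simp [hmid])
      simp at hu
    · -- x = t (left letter of pair is boundary t) : mid gets gen a appended
      obtain rfl : s = HLetter.gen ↑(φ a) :: r := hs'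
      exact hred.1 p (mid ++ [HLetter.gen ↑a]) r
        (by rw [hw, hq]; simp)
        (by intro l hl
            rcases List.mem_append.mp hl with hl | hl
            · exact hgen l hl
            · exact ⟨↑a, by simpa using hl⟩)
        (by rw [evalH_append, evalH_singleton]; exact mul_mem hmem a.2)
    · -- pair in s
      exact hred.1 p mid (s₁ ++ HLetter.gen ↑a :: HLetter.t :: r)
        (by rw [hw, hq]; simp) hgen hmem
    -- D2 : w pair [t, gen (φ a)], w' pair [gen a, t]
    · exact hred.1 (q ++ HLetter.t :: HLetter.gen ↑(φ a) :: p₁) mid s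
        (by rw [hw, hr]; simp) hgen hmem
    · -- y = tinv : t = tinv impossible
      simp at hy
    · -- x = tinv : gen a = tinv impossible
      simp at hx
    · simp at hx
    · obtain ⟨u, hu⟩ := hgen HLetter.t (by simp [hmid])
      simp at hu
    · -- y = t, x last of mid : x = gen a, mid = m₁ ++ [gen a]
      subst hmid
      refine hred.1 p m₁ (HLetter.gen ↑(φ a) :: s)
        (by rw [hw, hq, hr]; simp)
        (fun l hl => hgen l (by simp [hl]))
        ?_
      rw [evalH_append, evalH_singleton] at hmem
      exact mem_of_mul_mem_right a.2 hmem
    · -- x = t : gen a = t impossible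
      simp at hx
    · exact hred.1 p mid (s₁ ++ HLetter.t :: HLetter.gen ↑(φ a) :: r)
        (by rw [hw, hq]; simp) hgen hmem
    -- D3 : w pair [tinv, gen a], w' pair [gen (φ a), tinv]
    · exact hred.1 (q ++ HLetter.tinv :: HLetter.gen ↑a :: p₁) mid s
        (by rw [hw, hr]; simp) hgen hmem
    · -- y = tinv : pair straddles left boundary, x = gen (φ a) last of p
      exact hred.1 q (HLetter.gen ↑a :: mid) s
        (by rw [hw, hr]; simp)
        (by intro l hl
            rcases List.mem_cons.mp hl with rfl | hl
            · exact ⟨↑a, rfl⟩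
            · exact hgen l hl)
        (by rw [evalH_cons_gen]; exact mul_mem a.2 hmem)
    · -- x = tinv : gen (φ a) = tinv impossible
      simp at hx
    · simp at hx
    · obtain ⟨u, hu⟩ := hgen HLetter.tinv (by simp [hmid])
      simp at hu
    · -- y = t : tinv = t impossible
      simp at hy
    · -- x = t : tinv = t impossible
      simp at hx
    · exact hred.1 p mid (s₁ ++ HLetter.tinv :: HLetter.gen ↑a :: r)
        (by rw [hw, hq]; simp) hgen hmem
    -- D4 : w pair [gen (φ a), tinv], w' pair [tinv, gen a]
    · exact hred.1 (q ++ HLetter.gen ↑(φ a) :: HLetter.tinv :: p₁) mid s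
        (by rw [hw, hr]; simp) hgen hmem
    · -- y = tinv : y = gen a = tinv impossible
      simp at hy
    · -- x = tinv : matches! mid = [] ∧ y = t (gen a = t impossible)
      simp at hy
    · -- x = tinv, mid = gen a :: m₁
      subst hq
      obtain rfl : mid = HLetter.gen ↑a :: m₁ := hmid
      refine hred.1 (q ++ [HLetter.gen ↑(φ a)]) m₁ s
        (by rw [hw, hr]; simp)
        (fun l hl => hgen l (by simp [hl]))
        ?_
      rw [evalH_cons_gen] at hmem
      exact mem_of_mul_mem_left a.2 hmem
    · obtain ⟨u, hu⟩ := hgen HLetter.tinv (by simp [hmid])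
      simp at hu
    · -- y = t : gen a = t impossible
      simp at hy
    · -- x = t : tinv = t impossible
      simp at hx
    · exact hred.1 p mid (s₁ ++ HLetter.gen ↑(φ a) :: HLetter.tinv :: r)
        (by rw [hw, hq]; simp) hgen hmem
  · intro p mid s hw' hgen hmem
    rcases hcase with ⟨hw, hw'eq⟩ | ⟨hw, hw'eq⟩ | ⟨hw, hw'eq⟩ | ⟨hw, hw'eq⟩ <;>
      rw [hw'eq] at hw' <;>
      simp only [List.append_assoc, List.cons_append, List.nil_append] at hw' <;>
      rcases align hw' with ⟨p₁, hp, hr⟩ | ⟨hy, hp, hr⟩ |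
        ⟨hx, hq, (⟨hmid, hy, hr⟩ | ⟨m₁, hmid, hr⟩)⟩ |
        ⟨m₁, m₂, hmid, hq, hr⟩ | ⟨hy, m₁, hmid, hq, hr⟩ | ⟨hx, hq, hs'⟩ | ⟨s₁, hq, hs'⟩
    -- B window : w' = p ++ [t] ++ mid ++ [tinv] ++ s, evalH mid ∈ closure UB
    -- D1 : w pair [gen a, t], w' pair [t, gen (φ a)]
    · exact hred.2 (q ++ HLetter.gen ↑a :: HLetter.t :: p₁) mid s
        (by rw [hw, hr]; simp) hgen hmem
    · -- y = t : gen (φ a) = t impossible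
      simp at hy
    · -- x = t : matches, mid = [] and y = tinv : gen (φ a) = tinv impossible
      simp at hy
    · -- x = t, mid = gen (φ a) :: m₁
      subst hq
      obtain rfl : mid = HLetter.gen ↑(φ a) :: m₁ := hmid
      refine hred.2 (q ++ [HLetter.gen ↑a]) m₁ s
        (by rw [hw, hr]; simp)
        (fun l hl => hgen l (by simp [hl]))
        ?_
      rw [evalH_cons_gen] at hmem
      exact mem_of_mul_mem_left (φ a).2 hmem
    · obtain ⟨u, hu⟩ := hgen HLetter.t (by simp [hmid])
      simp at hu
    · -- y = tinv : gen (φ a) = tinv impossible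
      simp at hy
    · -- x = tinv : t = tinv impossible
      simp at hx
    · exact hred.2 p mid (s₁ ++ HLetter.gen ↑a :: HLetter.t :: r)
        (by rw [hw, hq]; simp) hgen hmem
    -- D2 : w pair [t, gen (φ a)], w' pair [gen a, t]
    · exact hred.2 (q ++ HLetter.t :: HLetter.gen ↑(φ a) :: p₁) mid s
        (by rw [hw, hr]; simp) hgen hmem
    · -- y = t : pair straddles left boundary, x = gen a last of p
      exact hred.2 q (HLetter.gen ↑(φ a) :: mid) s
        (by rw [hw, hr]; simp)
        (by intro l hl
            rcases List.mem_cons.mp hl with rfl | hl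
            · exact ⟨↑(φ a), rfl⟩
            · exact hgen l hl)
        (by rw [evalH_cons_gen]; exact mul_mem (φ a).2 hmem)
    · -- x = t : gen a = t impossible
      simp at hx
    · simp at hx
    · obtain ⟨u, hu⟩ := hgen HLetter.t (by simp [hmid])
      simp at hu
    · -- y = tinv : t = tinv impossible
      simp at hy
    · -- x = tinv : gen a = tinv impossible
      simp at hx
    · exact hred.2 p mid (s₁ ++ HLetter.t :: HLetter.gen ↑(φ a) :: r)
        (by rw [hw, hq]; simp) hgen hmem
    -- D3 : w pair [tinv, gen a], w' pair [gen (φ a), tinv]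
    · exact hred.2 (q ++ HLetter.tinv :: HLetter.gen ↑a :: p₁) mid s
        (by rw [hw, hr]; simp) hgen hmem
    · -- y = t : tinv = t impossible
      simp at hy
    · -- x = t : gen (φ a) = t impossible
      simp at hx
    · simp at hx
    · obtain ⟨u, hu⟩ := hgen HLetter.tinv (by simp [hmid])
      simp at hu
    · -- y = tinv, x = gen (φ a) last of mid
      subst hmid
      refine hred.2 p m₁ (HLetter.gen ↑a :: s)
        (by rw [hw, hq, hr]; simp)
        (fun l hl => hgen l (by simp [hl]))
        ?_
      rw [evalH_append, evalH_singleton] at hmem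
      exact mem_of_mul_mem_right (φ a).2 hmem
    · -- x = tinv : gen (φ a) = tinv impossible
      simp at hx
    · exact hred.2 p mid (s₁ ++ HLetter.tinv :: HLetter.gen ↑a :: r)
        (by rw [hw, hq]; simp) hgen hmem
    -- D4 : w pair [gen (φ a), tinv], w' pair [tinv, gen a]
    · exact hred.2 (q ++ HLetter.gen ↑(φ a) :: HLetter.tinv :: p₁) mid s
        (by rw [hw, hr]; simp) hgen hmem
    · -- y = t : gen a = t impossible
      simp at hy
    · -- x = t : tinv = t impossible
      simp at hx
    · simp at hx
    · obtain ⟨u, hu⟩ := hgen HLetter.tinv (by simp [hmid])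
      simp at hu
    · -- y = tinv, mid = m₁ ++ [x], x = tinv ∈ mid impossible
      obtain ⟨u, hu⟩ := hgen HLetter.tinv (by simp [hmid])
      simp at hu
    · -- x = tinv : pair straddles right boundary, y = gen a head of s
      obtain rfl : s = HLetter.gen ↑a :: r := hs'
      exact hred.2 p (mid ++ [HLetter.gen ↑(φ a)]) r
        (by rw [hw, hq]; simp)
        (by intro l hl
            rcases List.mem_append.mp hl with hl | hl
            · exact hgen l hl
            · exact ⟨↑(φ a), by simpa using hl⟩)
        (by rw [evalH_append, evalH_singleton]; exact mul_mem hmem (φ a).2)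
    · exact hred.2 p mid (s₁ ++ HLetter.gen ↑(φ a) :: HLetter.tinv :: r)
        (by rw [hw, hq]; simp) hgen hmem

lemma hnnred_of_sim {w w' : List (HLetter X)}
    (hred : HNNReducedWord UA UB w) (hs : Sim φ w w') :
    HNNReducedWord UA UB w' := by
  induction hs with
  | refl => exact hred
  | tail _ hstep ih => exact hnnred_of_elemSemi ih hstep

lemma tPow_eq_cons_t {z : ℤ} {m : List (HLetter X)}
    (h : tPow z = HLetter.t :: m) : 0 < z ∧ m = tPow (z - 1) := by
  rcases lt_trichotomy z 0 with hz | hz | hz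
  · rw [tPow_cons_neg hz] at h; simp at h
  · subst hz; rw [tPow_zero] at h; simp at h
  · rw [tPow_cons_pos hz] at h
    exact ⟨hz, (List.cons_eq_cons.mp h).2.symm⟩

lemma tPow_eq_cons_tinv {z : ℤ} {m : List (HLetter X)}
    (h : tPow z = HLetter.tinv :: m) : z < 0 ∧ m = tPow (z + 1) := by
  rcases lt_trichotomy z 0 with hz | hz | hz
  · rw [tPow_cons_neg hz] at h
    exact ⟨hz, (List.cons_eq_cons.mp h).2.symm⟩
  · subst hz; rw [tPow_zero] at h; simp at h
  · rw [tPow_cons_pos hz] at h; simp at h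

lemma tPow_eq_snoc_t {z : ℤ} {m : List (HLetter X)}
    (h : tPow z = m ++ [HLetter.t]) : 0 < z ∧ m = tPow (z - 1) := by
  rcases lt_trichotomy z 0 with hz | hz | hz
  · rw [tPow_snoc_neg hz] at h
    have := (List.append_inj' h rfl).2
    simp at this
  · subst hz; rw [tPow_zero] at h; simp at h
  · rw [tPow_snoc_pos hz] at h
    exact ⟨hz, ((List.append_inj' h rfl).1).symm⟩

lemma tPow_eq_snoc_tinv {z : ℤ} {m : List (HLetter X)}
    (h : tPow z = m ++ [HLetter.tinv]) : z < 0 ∧ m = tPow (z + 1) := by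
  rcases lt_trichotomy z 0 with hz | hz | hz
  · rw [tPow_snoc_neg hz] at h
    exact ⟨hz, ((List.append_inj' h rfl).1).symm⟩
  · subst hz; rw [tPow_zero] at h; simp at h
  · rw [tPow_snoc_pos hz] at h
    have := (List.append_inj' h rfl).2
    simp at this

/-- A deletion of an adjacent inverse pair separated by `t^z`, where the two letters
are `φ^z`-related. -/
def SepDel (φ : ↥(Subgroup.closure UA) ≃* ↥(Subgroup.closure UB))
    (w v : List (HLetter X)) : Prop :=
  ∃ (p s : List (HLetter X)) (z : ℤ) (u u' : FreeGroup X),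
    PhiZPow φ z u u'⁻¹ ∧
    w = p ++ HLetter.gen u :: (tPow z ++ HLetter.gen u' :: s) ∧
    v = p ++ tPow z ++ s

lemma evalH_pair (u : FreeGroup X) :
    evalH [HLetter.gen u, HLetter.gen u⁻¹] = 1 := by simp [evalH]

lemma isGenOnly_pair (u : FreeGroup X) :
    IsGenOnly [HLetter.gen u, HLetter.gen u⁻¹] := by
  intro l hl
  rcases List.mem_cons.mp hl with rfl | h
  · exact ⟨u, rfl⟩
  · simp only [List.mem_singleton] at h
    exact ⟨u⁻¹, h⟩

lemma phiZPow_zero_inv_inv (u : FreeGroup X) : PhiZPow φ 0 u u⁻¹⁻¹ := by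
  unfold PhiZPow
  rw [if_pos le_rfl]
  exact (inv_inv u).symm

lemma sepDel_of_cancelAt {m : ℕ} {w v : List (HLetter X)}
    (hred : HNNReducedWord UA UB w) (h : CancelAt m w v) : SepDel φ w v := by
  obtain ⟨n0, pre, post, u, n', _, hw, hv⟩ := h
  rcases hv with ⟨rfl, hv⟩ | ⟨pre', u₂, nl, rfl, hv⟩
  · -- pre = []
    simp only [blockWord, List.flatMap_append, List.flatMap_cons, List.flatMap_nil,
      tPow_zero, List.nil_append, List.append_nil, List.cons_append, List.append_assoc] at hw hv
    have hsign : (0 ≤ n0 ∧ 0 ≤ n') ∨ (n0 ≤ 0 ∧ n' ≤ 0) := by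
      by_contra hc
      push_neg at hc
      rcases lt_trichotomy n0 0 with h0 | h0 | h0
      · have hn' : 0 < n' := by omega
        refine hred.1 (tPow (n0 + 1)) [HLetter.gen u, HLetter.gen u⁻¹]
          (tPow (n' - 1) ++ post.flatMap fun p => HLetter.gen p.1 :: tPow p.2)
          ?_ (isGenOnly_pair u) (by rw [evalH_pair]; exact one_mem _)
        rw [hw, tPow_snoc_neg h0, tPow_cons_pos hn']
        simp
      · omega
      · have hn' : n' < 0 := by omega
        refine hred.2 (tPow (n0 - 1)) [HLetter.gen u, HLetter.gen u⁻¹]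
          (tPow (n' + 1) ++ post.flatMap fun p => HLetter.gen p.1 :: tPow p.2)
          ?_ (isGenOnly_pair u) (by rw [evalH_pair]; exact one_mem _)
        rw [hw, tPow_snoc_pos h0, tPow_cons_neg hn']
        simp
    refine ⟨tPow n0, tPow n' ++ post.flatMap fun p => HLetter.gen p.1 :: tPow p.2, 0, u, u⁻¹,
      phiZPow_zero_inv_inv u, by rw [hw]; simp [tPow_zero], ?_⟩
    rw [hv, tPow_zero]
    rcases hsign with ⟨h1, h2⟩ | ⟨h1, h2⟩
    · rw [tPow_add_nonneg h1 h2]; simp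
    · rw [tPow_add_nonpos h1 h2]; simp
  · -- pre = pre' ++ [(u₂, nl)]
    simp only [blockWord, List.flatMap_append, List.flatMap_cons, List.flatMap_nil,
      tPow_zero, List.nil_append, List.append_nil, List.cons_append, List.append_assoc] at hw hv
    have hsign : (0 ≤ nl ∧ 0 ≤ n') ∨ (nl ≤ 0 ∧ n' ≤ 0) := by
      by_contra hc
      push_neg at hc
      rcases lt_trichotomy nl 0 with h0 | h0 | h0
      · have hn' : 0 < n' := by omega
        refine hred.1 (tPow n0 ++ (pre'.flatMap fun p => HLetter.gen p.1 :: tPow p.2) ++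
            HLetter.gen u₂ :: tPow (nl + 1)) [HLetter.gen u, HLetter.gen u⁻¹]
          (tPow (n' - 1) ++ post.flatMap fun p => HLetter.gen p.1 :: tPow p.2)
          ?_ (isGenOnly_pair u) (by rw [evalH_pair]; exact one_mem _)
        rw [hw, tPow_snoc_neg h0, tPow_cons_pos hn']
        simp
      · omega
      · have hn' : n' < 0 := by omega
        refine hred.2 (tPow n0 ++ (pre'.flatMap fun p => HLetter.gen p.1 :: tPow p.2) ++
            HLetter.gen u₂ :: tPow (nl - 1)) [HLetter.gen u, HLetter.gen u⁻¹]
          (tPow (n' + 1) ++ post.flatMap fun p => HLetter.gen p.1 :: tPow p.2)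
          ?_ (isGenOnly_pair u) (by rw [evalH_pair]; exact one_mem _)
        rw [hw, tPow_snoc_pos h0, tPow_cons_neg hn']
        simp
    refine ⟨tPow n0 ++ (pre'.flatMap fun p => HLetter.gen p.1 :: tPow p.2) ++
        HLetter.gen u₂ :: tPow nl,
      tPow n' ++ post.flatMap fun p => HLetter.gen p.1 :: tPow p.2, 0, u, u⁻¹,
      phiZPow_zero_inv_inv u, by rw [hw]; simp [tPow_zero], ?_⟩
    rw [hv, tPow_zero]
    rcases hsign with ⟨h1, h2⟩ | ⟨h1, h2⟩
    · rw [tPow_add_nonneg h1 h2]; simp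
    · rw [tPow_add_nonpos h1 h2]; simp

lemma tPow_succ_snoc {z : ℤ} (hz : 0 ≤ z) :
    (tPow (z + 1) : List (HLetter X)) = tPow z ++ [HLetter.t] := by
  rw [tPow_snoc_pos (by omega)]
  simp only [add_sub_cancel_right]

lemma tPow_succ_cons {z : ℤ} (hz : 0 ≤ z) :
    (tPow (z + 1) : List (HLetter X)) = HLetter.t :: tPow z := by
  rw [tPow_cons_pos (by omega)]
  simp only [add_sub_cancel_right]

lemma tPow_pred_snoc {z : ℤ} (hz : z ≤ 0) :
    (tPow (z - 1) : List (HLetter X)) = tPow z ++ [HLetter.tinv] := by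
  rw [tPow_snoc_neg (by omega)]
  simp only [sub_add_cancel]

lemma tPow_pred_cons {z : ℤ} (hz : z ≤ 0) :
    (tPow (z - 1) : List (HLetter X)) = HLetter.tinv :: tPow z := by
  rw [tPow_cons_neg (by omega)]
  simp only [sub_add_cancel]

lemma sepDel_step {w v w' : List (HLetter X)} (hred : HNNReducedWord UA UB w)
    (hsd : SepDel φ w v) (hs : ElemSemi φ w w') :
    ∃ v', SepDel φ w' v' ∧ Sim φ v v' := by
  obtain ⟨p, s, z, u, u', hphi, hw, hv⟩ := hsd
  obtain ⟨q, r, a, ha, hcase⟩ := hs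
  have hrelA : PhiRel φ (↑a) ↑(φ a) := ⟨a, ha, rfl, rfl⟩
  rcases hcase with ⟨hwp, hw'⟩ | ⟨hwp, hw'⟩ | ⟨hwp, hw'⟩ | ⟨hwp, hw'⟩ <;>
    rw [hw] at hwp <;>
    replace hwp := hwp.symm <;>
    simp only [List.append_assoc, List.cons_append, List.nil_append] at hwp <;>
    rcases align hwp with ⟨p₁, hp, hr⟩ | ⟨hy, hp, hr⟩ |
      ⟨hx, hq, (⟨hmid, hy, hr⟩ | ⟨m₁, hmid, hr⟩)⟩ |
      ⟨m₁, m₂, hmid, hq, hr⟩ | ⟨hy, m₁, hmid, hq, hr⟩ | ⟨hx, hq, hs'⟩ | ⟨s₁, hq, hs'⟩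
  -- ==================== D1 : w pair [gen a, t] → w' pair [t, gen φa]
  · -- pair in p
    refine ⟨_, ⟨q ++ HLetter.t :: HLetter.gen ↑(φ a) :: p₁, s, z, u, u', hphi,
      by rw [hw', hr]; simp, rfl⟩, ?_⟩
    exact Relation.ReflTransGen.single
      ⟨q, p₁ ++ tPow z ++ s, a, ha, Or.inl ⟨by rw [hv, hp]; simp, by simp⟩⟩
  · simp at hy
  · simp at hy
  · -- x = gen u is gen a, mid = t :: m₁
    injection hx with hx'
    subst hx'
    obtain ⟨hz, hm⟩ := tPow_eq_cons_t hmid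
    subst hm
    subst hq
    refine ⟨_, ⟨q ++ [HLetter.t], s, z - 1, ↑(φ a), u', Z2 hrelA hphi,
      by rw [hw', hr]; simp, rfl⟩, ?_⟩
    have : v = (q ++ [HLetter.t]) ++ tPow (z - 1) ++ s := by rw [hv, hmid]; simp
    rw [this]
    exact Relation.ReflTransGen.refl
  · -- pair inside tPow z
    have hmem := mem_tPow (show HLetter.gen (↑a : FreeGroup X) ∈ tPow (X := X) z by
      rw [hmid]; simp)
    simp at hmem
  · simp at hy
  · -- x = gen u' is gen a, u' moves right into s
    injection hx with hx'
    subst hx'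
    by_cases hz : 0 ≤ z
    · obtain rfl : s = HLetter.t :: r := hs'
      refine ⟨_, ⟨p, r, z + 1, u, ↑(φ a), Z4 hphi (phiRel_inv hrelA),
        by rw [hw', hq, tPow_succ_snoc hz]; simp, rfl⟩, ?_⟩
      have : v = p ++ tPow (z + 1) ++ r := by rw [hv, tPow_succ_snoc hz]; simp
      rw [this]
      exact Relation.ReflTransGen.refl
    · exact absurd
        (show evalH [HLetter.gen (↑a : FreeGroup X)] ∈ Subgroup.closure UA by
          rw [evalH_singleton]; exact a.2)
        (hred.1 (p ++ HLetter.gen u :: tPow (z + 1)) [HLetter.gen ↑a] r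
          (by rw [hw, hs',
                show (tPow z : List (HLetter X)) = tPow (z+1) ++ [HLetter.tinv] from by
                  rw [tPow_snoc_neg (by omega)]]
              simp)
          (fun l hl => ⟨↑a, by simpa using hl⟩))
  · -- pair in s
    refine ⟨_, ⟨p, s₁ ++ HLetter.t :: HLetter.gen ↑(φ a) :: r, z, u, u', hphi,
      by rw [hw', hq]; simp, rfl⟩, ?_⟩
    exact Relation.ReflTransGen.single
      ⟨p ++ tPow z ++ s₁, r, a, ha, Or.inl ⟨by rw [hv, hs']; simp, by simp⟩⟩
  -- ==================== D2 : w pair [t, gen φa] → w' pair [gen a, t]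
  · refine ⟨_, ⟨q ++ HLetter.gen ↑a :: HLetter.t :: p₁, s, z, u, u', hphi,
      by rw [hw', hr]; simp, rfl⟩, ?_⟩
    exact Relation.ReflTransGen.single
      ⟨q, p₁ ++ tPow z ++ s, a, ha, Or.inr (Or.inl ⟨by rw [hv, hp]; simp, by simp⟩)⟩
  · -- y = gen u is gen φa : left straddle
    injection hy with hy'
    subst hy'
    by_cases hz : 0 ≤ z
    · refine ⟨_, ⟨q, s, z + 1, ↑a, u', Z1 hrelA hphi,
        by rw [hw', hr, tPow_succ_cons hz]; simp, rfl⟩, ?_⟩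
      have : v = q ++ tPow (z + 1) ++ s := by rw [hv, hp, tPow_succ_cons hz]; simp
      rw [this]
      exact Relation.ReflTransGen.refl
    · exact absurd
        (show evalH [HLetter.gen ((↑(φ a) : FreeGroup X))] ∈ Subgroup.closure UB by
          rw [evalH_singleton]; exact (φ a).2)
        (hred.2 q [HLetter.gen ↑(φ a)] (tPow (z + 1) ++ HLetter.gen u' :: s)
          (by rw [hw, hp, tPow_cons_neg (by omega)]; simp)
          (fun l hl => ⟨↑(φ a), by simpa using hl⟩))
  · simp at hx
  · simp at hx
  · have hmem := mem_tPow (show HLetter.gen ((↑(φ a) : FreeGroup X)) ∈ tPow (X := X) z by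
      rw [hmid]; simp)
    simp at hmem
  · -- y = gen u' is gen φa, x = t last of tPow z
    injection hy with hy'
    subst hy'
    obtain ⟨hz, hm⟩ := tPow_eq_snoc_t hmid
    subst hm
    refine ⟨_, ⟨p, HLetter.t :: s, z - 1, u, ↑a, Z3 hphi (phiRel_inv hrelA),
      by rw [hw', hq, hr]; simp, rfl⟩, ?_⟩
    have : v = p ++ tPow (z - 1) ++ (HLetter.t :: s) := by rw [hv, hmid]; simp
    rw [this]
    exact Relation.ReflTransGen.refl
  · simp at hx
  · refine ⟨_, ⟨p, s₁ ++ HLetter.gen ↑a :: HLetter.t :: r, z, u, u', hphi,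
      by rw [hw', hq]; simp, rfl⟩, ?_⟩
    exact Relation.ReflTransGen.single
      ⟨p ++ tPow z ++ s₁, r, a, ha, Or.inr (Or.inl ⟨by rw [hv, hs']; simp, by simp⟩)⟩
  -- ==================== D3 : w pair [tinv, gen a] → w' pair [gen φa, tinv]
  · refine ⟨_, ⟨q ++ HLetter.gen ↑(φ a) :: HLetter.tinv :: p₁, s, z, u, u', hphi,
      by rw [hw', hr]; simp, rfl⟩, ?_⟩
    exact Relation.ReflTransGen.single
      ⟨q, p₁ ++ tPow z ++ s, a, ha, Or.inr (Or.inr (Or.inl ⟨by rw [hv, hp]; simp, by simp⟩))⟩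
  · -- y = gen u is gen a : left straddle with tinv
    injection hy with hy'
    subst hy'
    by_cases hz : z ≤ 0
    · refine ⟨_, ⟨q, s, z - 1, ↑(φ a), u', Z2 hrelA hphi,
        by rw [hw', hr, tPow_pred_cons hz]; simp, rfl⟩, ?_⟩
      have : v = q ++ tPow (z - 1) ++ s := by rw [hv, hp, tPow_pred_cons hz]; simp
      rw [this]
      exact Relation.ReflTransGen.refl
    · exact absurd
        (show evalH [HLetter.gen ((↑a : FreeGroup X))] ∈ Subgroup.closure UA by
          rw [evalH_singleton]; exact a.2)
        (hred.1 q [HLetter.gen ↑a] (tPow (z - 1) ++ HLetter.gen u' :: s)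
          (by rw [hw, hp, tPow_cons_pos (by omega)]; simp)
          (fun l hl => ⟨↑a, by simpa using hl⟩))
  · simp at hx
  · simp at hx
  · have hmem := mem_tPow (show HLetter.gen ((↑a : FreeGroup X)) ∈ tPow (X := X) z by
      rw [hmid]; simp)
    simp at hmem
  · -- y = gen u' is gen a, x = tinv last of tPow z
    injection hy with hy'
    subst hy'
    obtain ⟨hz, hm⟩ := tPow_eq_snoc_tinv hmid
    subst hm
    refine ⟨_, ⟨p, HLetter.tinv :: s, z + 1, u, ↑(φ a), Z4 hphi (phiRel_inv hrelA),
      by rw [hw', hq, hr]; simp, rfl⟩, ?_⟩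
    have : v = p ++ tPow (z + 1) ++ (HLetter.tinv :: s) := by rw [hv, hmid]; simp
    rw [this]
    exact Relation.ReflTransGen.refl
  · simp at hx
  · refine ⟨_, ⟨p, s₁ ++ HLetter.gen ↑(φ a) :: HLetter.tinv :: r, z, u, u', hphi,
      by rw [hw', hq]; simp, rfl⟩, ?_⟩
    exact Relation.ReflTransGen.single
      ⟨p ++ tPow z ++ s₁, r, a, ha, Or.inr (Or.inr (Or.inl ⟨by rw [hv, hs']; simp, by simp⟩))⟩
  -- ==================== D4 : w pair [gen φa, tinv] → w' pair [tinv, gen a]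
  · refine ⟨_, ⟨q ++ HLetter.tinv :: HLetter.gen ↑a :: p₁, s, z, u, u', hphi,
      by rw [hw', hr]; simp, rfl⟩, ?_⟩
    exact Relation.ReflTransGen.single
      ⟨q, p₁ ++ tPow z ++ s, a, ha, Or.inr (Or.inr (Or.inr ⟨by rw [hv, hp]; simp, by simp⟩))⟩
  · simp at hy
  · simp at hy
  · -- x = gen u is gen φa, mid = tinv :: m₁
    injection hx with hx'
    subst hx'
    obtain ⟨hz, hm⟩ := tPow_eq_cons_tinv hmid
    subst hm
    subst hq
    refine ⟨_, ⟨q ++ [HLetter.tinv], s, z + 1, ↑a, u', Z1 hrelA hphi,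
      by rw [hw', hr]; simp, rfl⟩, ?_⟩
    have : v = (q ++ [HLetter.tinv]) ++ tPow (z + 1) ++ s := by rw [hv, hmid]; simp
    rw [this]
    exact Relation.ReflTransGen.refl
  · have hmem := mem_tPow (show HLetter.gen ((↑(φ a) : FreeGroup X)) ∈ tPow (X := X) z by
      rw [hmid]; simp)
    simp at hmem
  · simp at hy
  · -- x = gen u' is gen φa, u' moves right into s
    injection hx with hx'
    subst hx'
    by_cases hz : z ≤ 0
    · obtain rfl : s = HLetter.tinv :: r := hs'
      refine ⟨_, ⟨p, r, z - 1, u, ↑a, Z3 hphi (phiRel_inv hrelA),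
        by rw [hw', hq, tPow_pred_snoc hz]; simp, rfl⟩, ?_⟩
      have : v = p ++ tPow (z - 1) ++ r := by rw [hv, tPow_pred_snoc hz]; simp
      rw [this]
      exact Relation.ReflTransGen.refl
    · exact absurd
        (show evalH [HLetter.gen ((↑(φ a) : FreeGroup X))] ∈ Subgroup.closure UB by
          rw [evalH_singleton]; exact (φ a).2)
        (hred.2 (p ++ HLetter.gen u :: tPow (z - 1)) [HLetter.gen ↑(φ a)] r
          (by rw [hw, hs',
                show (tPow z : List (HLetter X)) = tPow (z-1) ++ [HLetter.t] from by
                  rw [tPow_snoc_pos (by omega)]]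
              simp)
          (fun l hl => ⟨↑(φ a), by simpa using hl⟩))
  · refine ⟨_, ⟨p, s₁ ++ HLetter.tinv :: HLetter.gen ↑a :: r, z, u, u', hphi,
      by rw [hw', hq]; simp, rfl⟩, ?_⟩
    exact Relation.ReflTransGen.single
      ⟨p ++ tPow z ++ s₁, r, a, ha, Or.inr (Or.inr (Or.inr ⟨by rw [hv, hs']; simp, by simp⟩))⟩

lemma sepDel_chain {w v w'' : List (HLetter X)} (hred : HNNReducedWord UA UB w)
    (hsim : Sim φ w w'') (hsd : SepDel φ w v) :
    ∃ v'', SepDel φ w'' v'' ∧ Sim φ v v'' := by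
  induction hsim with
  | refl => exact ⟨v, hsd, Relation.ReflTransGen.refl⟩
  | tail hst hstep ih =>
      obtain ⟨v', hsd', hsim'⟩ := ih
      obtain ⟨v'', hsd'', hsim''⟩ := sepDel_step (hnnred_of_sim hred hst) hsd' hstep
      exact ⟨v'', hsd'', hsim'.trans hsim''⟩

lemma wordOver_of_sepDel {S : Set (FreeGroup X)} {w v : List (HLetter X)}
    (h : SepDel φ w v) (hw : WordOver S w) : WordOver S v := by
  obtain ⟨p, s, z, u, u', _, hweq, hveq⟩ := h
  intro l hl u0 hl0
  refine hw l ?_ u0 hl0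
  rw [hveq] at hl
  rw [hweq]
  simp only [List.mem_append, List.mem_cons] at hl ⊢
  tauto

end Aux

end HnnPaper

open HnnPaper

theorem statement_11
    (X : Type*) [Finite X]
    (UH UA UB : Set (FreeGroup X))
    (hUH : IsFreeBasis UH) (hUAH : UA ⊆ UH) (hUBH : UB ⊆ UH)
    (φ : ↥(Subgroup.closure UA) ≃* ↥(Subgroup.closure UB))
    (hφ : ∀ a : ↥(Subgroup.closure UA), (a : FreeGroup X) ∈ UA ∪ UA⁻¹ ↔
      ((φ a : ↥(Subgroup.closure UB)) : FreeGroup X) ∈ UB ∪ UB⁻¹)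
    (VH : Set (FreeGroup X)) (hVH : VH ⊆ UH ∪ UH⁻¹)
    (v1 vk : List (HLetter X))
    (hv1 : WordOver VH v1) (hv1red : HNNReducedWord UA UB v1)
    (hvk : WordOver (UH ∪ UH⁻¹) vk) (hvkred : HNNReducedWord UA UB vk)
    (h : Succsim φ v1 vk) :
    ∃ vk' : List (HLetter X), WordOver VH vk' ∧ Sim φ vk vk' := by
  rcases h with hsim | htg
  · exact ⟨v1, hv1, sim_symm hsim⟩
  · have key : ∀ x y : List (HLetter X), Rsa φ x y →
        (∃ w'', WordOver VH w'' ∧ Sim φ x w'') →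
        ∃ w'', WordOver VH w'' ∧ Sim φ y w'' := by
      rintro x y ⟨m, w₁, v₁, hw₁red, hv₁red, hsim1, hcan, hsim2⟩ ⟨ww, hww, hsimx⟩
      have hsim3 : Sim φ w₁ ww := (sim_symm hsim1).trans hsimx
      have hsd := sepDel_of_cancelAt (φ := φ) hw₁red hcan
      obtain ⟨v'', hsd'', hsimv⟩ := sepDel_chain hw₁red hsim3 hsd
      exact ⟨v'', wordOver_of_sepDel hsd'' hww, (sim_symm hsim2).trans hsimv⟩
    clear hvk hvkred
    induction htg with
    | single hr => exact key _ _ hr ⟨v1, hv1, Relation.ReflTransGen.refl⟩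
    | tail _ hr ih => exact key _ _ hr ih
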